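/- arXiv:1710.08707 — 4 statements merged into one kernel-verified Lean document; each statement's English description precedes it below -/
import Mathlib

section
/- For all ε, δ ∈ (0, ∞) there exists a constant c ∈ (0, ∞) with the following property: for every N ∈ ℕ with N ≥ 1 and all independent real-valued random variables Z₁, …, Z_N, each normally distributed (with arbitrary mean) with variance at least δ², one has P( Σ_{i=1}^N |Z_i| ≥ c·N ) ≥ 1 − ε. -/
open MeasureTheory ProbabilityTheory Real
open scoped NNReal ENNReal

lemma gauss_small (m : ℝ) (v : ℝ≥0) (δ t : ℝ) (hδ : 0 < δ) (ht : 0 ≤ t)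
    (hv : δ ^ 2 ≤ (v : ℝ)) :
    gaussianReal m v (Set.Ioo (-t) t) ≤ ENNReal.ofReal (t / δ) := by
  have hv0 : v ≠ 0 := by
    intro h
    rw [h] at hv
    simp at hv
    nlinarith
  rw [gaussianReal_apply _ hv0]
  have hpdf : ∀ x, gaussianPDF m v x ≤ ENNReal.ofReal ((2 * δ)⁻¹) := by
    intro x
    refine ENNReal.ofReal_le_ofReal ?_
    have h1 : rexp (-(x - m) ^ 2 / (2 * v)) ≤ 1 := by
      rw [Real.exp_le_one_iff]
      apply div_nonpos_of_nonpos_of_nonneg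
      · nlinarith [sq_nonneg (x - m)]
      · positivity
    have h2 : (2 * δ) ≤ Real.sqrt (2 * π * v) := by
      have : (2 * δ) = Real.sqrt ((2 * δ) ^ 2) := (Real.sqrt_sq (by positivity)).symm
      rw [this]
      apply Real.sqrt_le_sqrt
      nlinarith [Real.pi_gt_three]
    have h3 : (Real.sqrt (2 * π * v))⁻¹ ≤ (2 * δ)⁻¹ := by
      apply inv_anti₀ (by positivity) h2
    calc gaussianPDFReal m v x = (Real.sqrt (2 * π * v))⁻¹ * rexp (-(x - m) ^ 2 / (2 * v)) := rfl
      _ ≤ (2 * δ)⁻¹ * 1 := by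
          apply mul_le_mul h3 h1 (le_of_lt (Real.exp_pos _)) (by positivity)
      _ = (2 * δ)⁻¹ := mul_one _
  calc ∫⁻ x in Set.Ioo (-t) t, gaussianPDF m v x
      ≤ ∫⁻ _ in Set.Ioo (-t) t, ENNReal.ofReal ((2 * δ)⁻¹) :=
        lintegral_mono fun x => hpdf x
    _ = ENNReal.ofReal ((2 * δ)⁻¹) * volume (Set.Ioo (-t) t) := by
        rw [setLIntegral_const]
    _ = ENNReal.ofReal ((2 * δ)⁻¹) * ENNReal.ofReal (t - -t) := by
        rw [Real.volume_Ioo]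
    _ = ENNReal.ofReal ((2 * δ)⁻¹ * (t - -t)) :=
        (ENNReal.ofReal_mul (by positivity)).symm
    _ ≤ ENNReal.ofReal (t / δ) := by
        apply ENNReal.ofReal_le_ofReal
        rw [div_eq_mul_inv]
        ring_nf
        apply le_of_eq
        field_simp

/-- For all `ε, δ > 0` there is `c > 0` such that for every `N ≥ 1` and all independent
real random variables `Z₁, …, Z_N`, each Gaussian with variance at least `δ²`,
`P(∑ |Z_i| ≥ c N) ≥ 1 - ε`. -/
theorem stmt_1 (ε δ : ℝ) (hε : 0 < ε) (hδ : 0 < δ) :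
    ∃ c : ℝ, 0 < c ∧
      ∀ (Ω : Type) (_ : MeasurableSpace Ω) (P : Measure Ω) (_ : IsProbabilityMeasure P)
        (N : ℕ) (_ : 1 ≤ N) (Z : Fin N → Ω → ℝ) (μ : Fin N → ℝ) (v : Fin N → ℝ≥0),
        iIndepFun Z P →
        (∀ i, Measure.map (Z i) P = gaussianReal (μ i) (v i)) →
        (∀ i, δ ^ 2 ≤ (v i : ℝ)) →
        1 - ε ≤ (P {ω | c * N ≤ ∑ i, |Z i ω|}).toReal := by
  set t : ℝ := ε * δ / 4 with ht_def
  have ht : 0 < t := by positivity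
  refine ⟨t / 2, by positivity, ?_⟩
  intro Ω mΩ P hP N hN Z μ v _ hmap hvar
  -- Z i is a.e. measurable
  have hZae : ∀ i, AEMeasurable (Z i) P := by
    intro i
    by_contra h
    have h0 := hmap i
    rw [Measure.map_of_not_aemeasurable h] at h0
    have := congrArg (fun m : Measure ℝ => m Set.univ) h0
    simp at this
  set W : Fin N → Ω → ℝ := fun i => (hZae i).mk (Z i) with hW_def
  have hW : ∀ i, Measurable (W i) := fun i => (hZae i).measurable_mk
  have hWZ : ∀ i, Z i =ᵐ[P] W i := fun i => (hZae i).ae_eq_mk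
  have hmapW : ∀ i, Measure.map (W i) P = gaussianReal (μ i) (v i) := by
    intro i
    rw [← Measure.map_congr (hWZ i)]
    exact hmap i
  -- the bad events
  set A : Fin N → Set Ω := fun i => W i ⁻¹' (Set.Ioo (-t) t) with hA_def
  have hAmeas : ∀ i, MeasurableSet (A i) := fun i => (hW i) measurableSet_Ioo
  have hA : ∀ i, P (A i) ≤ ENNReal.ofReal (ε / 4) := by
    intro i
    have h1 : P (A i) = (Measure.map (W i) P) (Set.Ioo (-t) t) := by
      rw [Measure.map_apply (hW i) measurableSet_Ioo]
    rw [h1, hmapW i]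
    have h2 := gauss_small (μ i) (v i) δ t hδ ht.le (hvar i)
    have heq : ENNReal.ofReal (t / δ) = ENNReal.ofReal (ε / 4) := by
      congr 1
      rw [ht_def]
      field_simp
    exact heq ▸ h2
  -- the count of bad indices
  set F : Ω → ℝ≥0∞ := fun ω => ∑ i, (A i).indicator 1 ω with hF_def
  have hFmeas : Measurable F := by
    apply Finset.measurable_sum
    intro i _
    exact (measurable_const.indicator (hAmeas i))
  have hFint : ∫⁻ ω, F ω ∂P ≤ (N : ℝ≥0∞) * ENNReal.ofReal (ε / 4) := by
    have key : ∫⁻ ω, ∑ i, (A i).indicator (1 : Ω → ℝ≥0∞) ω ∂P = ∑ i, P (A i) := by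
      rw [lintegral_finset_sum (f := fun i => (A i).indicator (1 : Ω → ℝ≥0∞)) _ (fun i _ => measurable_const.indicator (hAmeas i))]
      refine Finset.sum_congr rfl fun i _ => ?_
      rw [lintegral_indicator (hAmeas i)]
      simp
    calc ∫⁻ ω, F ω ∂P = ∑ i, P (A i) := key
      _ ≤ ∑ _i : Fin N, ENNReal.ofReal (ε / 4) := Finset.sum_le_sum fun i _ => hA i
      _ = (N : ℝ≥0∞) * ENNReal.ofReal (ε / 4) := by
          rw [Finset.sum_const, Finset.card_univ, Fintype.card_fin, nsmul_eq_mul]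
  -- Markov
  have hmarkov : P {ω | (N : ℝ≥0∞) / 2 ≤ F ω} ≤ ENNReal.ofReal (ε / 2) := by
    have h1 := mul_meas_ge_le_lintegral₀ (μ := P) hFmeas.aemeasurable ((N : ℝ≥0∞) / 2)
    have h2 : (N : ℝ≥0∞) / 2 * P {ω | (N : ℝ≥0∞) / 2 ≤ F ω}
        ≤ (N : ℝ≥0∞) / 2 * ENNReal.ofReal (ε / 2) := by
      refine h1.trans (hFint.trans ?_)
      have : (N : ℝ≥0∞) * ENNReal.ofReal (ε / 4) = (N : ℝ≥0∞) / 2 * (2 * ENNReal.ofReal (ε / 4)) := by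
        rw [← mul_assoc, ENNReal.div_mul_cancel (by norm_num) (by norm_num)]
      rw [this]
      gcongr
      rw [← ENNReal.ofReal_ofNat, ← ENNReal.ofReal_mul (by norm_num)]
      apply ENNReal.ofReal_le_ofReal
      apply le_of_eq
      ring
    have hN0 : (N : ℝ≥0∞) / 2 ≠ 0 := by
      simp only [ne_eq, ENNReal.div_eq_zero_iff]
      push_neg
      constructor
      · exact Nat.cast_ne_zero.2 (by omega)
      · norm_num
    have hNtop : (N : ℝ≥0∞) / 2 ≠ ∞ := by
      apply ne_of_lt
      apply ENNReal.div_lt_top (by simp) (by norm_num)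
    exact (ENNReal.mul_le_mul_iff_right hN0 hNtop).1 h2
  -- the good event for W
  set G : Set Ω := {ω | t / 2 * N ≤ ∑ i, |W i ω|} with hG_def
  have hGmeas : MeasurableSet G := by
    apply measurableSet_le measurable_const
    exact Finset.measurable_sum _ fun i _ => (hW i).abs
  -- inclusion: Gᶜ ⊆ {N/2 ≤ F}
  have hsub : Gᶜ ⊆ {ω | (N : ℝ≥0∞) / 2 ≤ F ω} := by
    intro ω hω
    simp only [hG_def, Set.mem_compl_iff, Set.mem_setOf_eq, not_le] at hω
    set S : Finset (Fin N) := Finset.univ.filter (fun i => W i ω ∈ Set.Ioo (-t) t) with hS_def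
    have hFω : F ω = (S.card : ℝ≥0∞) := by
      calc F ω = ∑ i, (A i).indicator (1 : Ω → ℝ≥0∞) ω := rfl
        _ = ∑ i, (if i ∈ S then (1 : ℝ≥0∞) else 0) := by
            refine Finset.sum_congr rfl fun i _ => ?_
            simp only [hS_def, Finset.mem_filter, Finset.mem_univ, true_and,
              Set.indicator_apply, hA_def, Set.mem_preimage, Pi.one_apply]
            by_cases h : W i ω ∈ Set.Ioo (-t) t <;> simp [Set.indicator, h]
        _ = ∑ _i ∈ S, (1 : ℝ≥0∞) := by rw [Finset.sum_ite_mem, Finset.univ_inter]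
        _ = (S.card : ℝ≥0∞) := by rw [Finset.sum_const, nsmul_eq_mul, mul_one]
    have hcard : N ≤ 2 * S.card := by
      by_contra hc
      push_neg at hc
      have hSc : (Sᶜ.card : ℝ) = N - S.card := by
        rw [Finset.card_compl]
        rw [Nat.cast_sub (Finset.card_le_univ S)]
        simp
      have hlow : ∀ i ∈ Sᶜ, t ≤ |W i ω| := by
        intro i hi
        simp only [hS_def, Finset.mem_compl, Finset.mem_filter, Finset.mem_univ, true_and,
          Set.mem_Ioo] at hi
        rw [← abs_lt] at hi
        linarith [not_lt.1 fun h => hi h]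
      have h1 : ∑ i ∈ Sᶜ, |W i ω| ≤ ∑ i, |W i ω| := by
        apply Finset.sum_le_sum_of_subset_of_nonneg (Finset.subset_univ _)
        intro i _ _
        exact abs_nonneg _
      have h2 : (Sᶜ.card : ℝ) * t ≤ ∑ i ∈ Sᶜ, |W i ω| := by
        calc (Sᶜ.card : ℝ) * t = ∑ _i ∈ Sᶜ, t := by rw [Finset.sum_const, nsmul_eq_mul]
          _ ≤ ∑ i ∈ Sᶜ, |W i ω| := Finset.sum_le_sum hlow
      have h3 : (N : ℝ) / 2 ≤ (Sᶜ.card : ℝ) := by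
        rw [hSc]
        have : (2 * S.card : ℝ) < N := by exact_mod_cast hc
        linarith
      have : t / 2 * N ≤ ∑ i, |W i ω| := by
        calc t / 2 * N = (N : ℝ) / 2 * t := by ring
          _ ≤ (Sᶜ.card : ℝ) * t := by gcongr
          _ ≤ ∑ i ∈ Sᶜ, |W i ω| := h2
          _ ≤ ∑ i, |W i ω| := h1
      linarith
    rw [Set.mem_setOf_eq, hFω]
    rw [ENNReal.div_le_iff (by norm_num) (by norm_num)]
    calc (N : ℝ≥0∞) ≤ ((2 * S.card : ℕ) : ℝ≥0∞) := by exact_mod_cast Nat.cast_le.2 hcard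
      _ = (S.card : ℝ≥0∞) * 2 := by push_cast; ring
  have hGc : P Gᶜ ≤ ENNReal.ofReal (ε / 2) := le_trans (measure_mono hsub) hmarkov
  -- relate to Z
  have hsets : {ω | t / 2 * N ≤ ∑ i, |Z i ω|} =ᵐ[P] G := by
    rw [Filter.eventuallyEq_set]
    have hall : ∀ᵐ ω ∂P, ∀ i, Z i ω = W i ω := (ae_all_iff).2 hWZ
    filter_upwards [hall] with ω hω
    have hsum : ∑ i, |Z i ω| = ∑ i, |W i ω| :=
      Finset.sum_congr rfl fun i _ => by rw [hω i]
    simp only [Set.mem_setOf_eq, hG_def, hsum]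
  rw [measure_congr hsets]
  have hle1 : P G ≤ 1 := prob_le_one
  have hcompl : (P Gᶜ).toReal = 1 - (P G).toReal := by
    rw [measure_compl hGmeas (measure_ne_top _ _)]
    rw [measure_univ, ENNReal.toReal_sub_of_le hle1 (by norm_num)]
    simp
  have hGcR : (P Gᶜ).toReal ≤ ε / 2 := by
    apply ENNReal.toReal_le_of_le_ofReal (by linarith) hGc
  linarith [hcompl ▸ hGcR]
end

section
/- For all ε, δ ∈ (0, ∞) there exists a constant c ∈ (0, ∞) with the following property: for every N ∈ ℕ with N ≥ 1 and all independent real-valued random variables Z₁, …, Z_N, each normally distributed (with arbitrary mean) with variance at least δ², one has P( max_{i=1,…,N} |Z_i| ≥ c·√(ln N) ) ≥ 1 − ε. -/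
open MeasureTheory ProbabilityTheory Real Set
open scoped NNReal ENNReal
set_option maxHeartbeats 1000000

lemma gauss_Ioo_le {δ : ℝ} (hδ : 0 < δ) (m t : ℝ) (ht : 0 ≤ t) (v : ℝ≥0)
    (hv : δ ^ 2 ≤ (v : ℝ)) :
    (gaussianReal m v (Set.Ioo (-t) t)).toReal ≤ t / δ := by
  have hv0 : v ≠ 0 := by
    intro h; rw [h] at hv; norm_num at hv; nlinarith
  set C : ℝ := (Real.sqrt (2 * π * v))⁻¹ with hCdef
  have hCpos : 0 < Real.sqrt (2 * π * v) := by
    apply Real.sqrt_pos.2; have := Real.pi_gt_three; nlinarith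
  have hC : C ≤ (2*δ)⁻¹ := by
    apply inv_anti₀ (by positivity)
    have h1 : (2*δ)^2 ≤ 2 * π * v := by nlinarith [Real.pi_gt_three]
    calc 2*δ = Real.sqrt ((2*δ)^2) := (Real.sqrt_sq (by positivity)).symm
    _ ≤ _ := Real.sqrt_le_sqrt h1
  have hpdf : ∀ x : ℝ, gaussianPDF m v x ≤ ENNReal.ofReal C := by
    intro x
    apply ENNReal.ofReal_le_ofReal
    rw [gaussianPDFReal]
    have hexp : Real.exp (-(x - m)^2 / (2*v)) ≤ 1 := by
      rw [Real.exp_le_one_iff]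
      apply div_nonpos_of_nonpos_of_nonneg (neg_nonpos.2 (sq_nonneg _))
      positivity
    calc C * Real.exp (-(x - m)^2 / (2*v)) ≤ C * 1 := by
          apply mul_le_mul_of_nonneg_left hexp (by positivity)
    _ = C := mul_one C
  have hle : gaussianReal m v (Set.Ioo (-t) t) ≤ ENNReal.ofReal (C * (2*t)) := by
    rw [gaussianReal_apply _ hv0]
    calc ∫⁻ x in Set.Ioo (-t) t, gaussianPDF m v x
        ≤ ∫⁻ _ in Set.Ioo (-t) t, ENNReal.ofReal C := lintegral_mono fun x => hpdf x
    _ = ENNReal.ofReal C * volume (Set.Ioo (-t) t) := setLIntegral_const _ _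
    _ = ENNReal.ofReal C * ENNReal.ofReal (t - -t) := by rw [Real.volume_Ioo]
    _ = ENNReal.ofReal (C * (2*t)) := by
        rw [← ENNReal.ofReal_mul (by positivity)]; ring_nf
  calc (gaussianReal m v (Set.Ioo (-t) t)).toReal
      ≤ (ENNReal.ofReal (C * (2*t))).toReal := ENNReal.toReal_mono ENNReal.ofReal_ne_top hle
  _ = C * (2*t) := ENNReal.toReal_ofReal (by positivity)
  _ ≤ (2*δ)⁻¹ * (2*t) := mul_le_mul_of_nonneg_right hC (by positivity)
  _ = t / δ := by field_simp

lemma gauss_tail_ge {δ : ℝ} (hδ : 0 < δ) (m t : ℝ) (ht : 0 ≤ t) (v : ℝ≥0)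
    (hv : δ ^ 2 ≤ (v : ℝ)) :
    (Real.sqrt (2 * π))⁻¹ * Real.exp (-(t/δ + 1)^2 / 2)
      ≤ (gaussianReal m v {x : ℝ | t ≤ |x|}).toReal := by
  have hv0 : v ≠ 0 := by
    intro h; rw [h] at hv; norm_num at hv; nlinarith
  set sv : ℝ := Real.sqrt v with hsv
  have hvpos : (0:ℝ) < v := lt_of_lt_of_le (by positivity) hv
  have hsvpos : 0 < sv := Real.sqrt_pos.2 hvpos
  have hsvsq : sv ^ 2 = (v : ℝ) := Real.sq_sqrt hvpos.le
  have hδsv : δ ≤ sv := by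
    calc δ = Real.sqrt (δ^2) := (Real.sqrt_sq hδ.le).symm
    _ ≤ sv := Real.sqrt_le_sqrt hv
  -- choose the interval
  obtain ⟨a, hsub, hdist⟩ : ∃ a : ℝ, Set.Icc a (a + sv) ⊆ {x : ℝ | t ≤ |x|} ∧
      ∀ x ∈ Set.Icc a (a + sv), (x - m)^2 ≤ (t + sv)^2 := by
    rcases le_or_gt 0 m with hm | hm
    · refine ⟨m + t, ?_, ?_⟩
      · intro x hx
        simp only [Set.mem_Icc] at hx
        have hx0 : 0 ≤ x := by linarith
        simp only [Set.mem_setOf_eq, abs_of_nonneg hx0]; linarith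
      · intro x hx
        simp only [Set.mem_Icc] at hx
        nlinarith
    · refine ⟨m - t - sv, ?_, ?_⟩
      · intro x hx
        simp only [Set.mem_Icc] at hx
        have hx0 : x ≤ 0 := by linarith
        simp only [Set.mem_setOf_eq, abs_of_nonpos hx0]; linarith
      · intro x hx
        simp only [Set.mem_Icc] at hx
        nlinarith
  set c0 : ℝ := (Real.sqrt (2 * π * v))⁻¹ * Real.exp (-(t + sv)^2 / (2*v)) with hc0
  have hc0pos : 0 < c0 := by positivity
  have hpdf : ∀ x ∈ Set.Icc a (a + sv), ENNReal.ofReal c0 ≤ gaussianPDF m v x := by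
    intro x hx
    apply ENNReal.ofReal_le_ofReal
    rw [gaussianPDFReal]
    apply mul_le_mul_of_nonneg_left _ (by positivity)
    apply Real.exp_le_exp.2
    apply div_le_div_of_nonneg_right _ (by positivity)
    · have := hdist x hx; linarith
  have hlb : ENNReal.ofReal (c0 * sv) ≤ gaussianReal m v {x : ℝ | t ≤ |x|} := by
    calc ENNReal.ofReal (c0 * sv)
        = ENNReal.ofReal c0 * ENNReal.ofReal (a + sv - a) := by
          rw [← ENNReal.ofReal_mul hc0pos.le]; ring_nf
    _ = ENNReal.ofReal c0 * volume (Set.Icc a (a + sv)) := by rw [Real.volume_Icc]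
    _ = ∫⁻ _ in Set.Icc a (a + sv), ENNReal.ofReal c0 := (setLIntegral_const _ _).symm
    _ ≤ ∫⁻ x in Set.Icc a (a + sv), gaussianPDF m v x := by
          apply setLIntegral_mono (measurable_gaussianPDF m v) hpdf
    _ = gaussianReal m v (Set.Icc a (a + sv)) := (gaussianReal_apply _ hv0 _).symm
    _ ≤ gaussianReal m v {x : ℝ | t ≤ |x|} := measure_mono hsub
  have hfin : gaussianReal m v {x : ℝ | t ≤ |x|} ≠ ⊤ := measure_ne_top _ _
  have h1 : c0 * sv ≤ (gaussianReal m v {x : ℝ | t ≤ |x|}).toReal := by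
    have := ENNReal.toReal_mono hfin hlb
    rwa [ENNReal.toReal_ofReal (by positivity)] at this
  refine le_trans ?_ h1
  -- real inequality
  have hsplit : Real.sqrt (2 * π * v) = Real.sqrt (2 * π) * sv := by
    rw [hsv, ← Real.sqrt_mul (by positivity)]
  have hexp : Real.exp (-(t/δ + 1)^2 / 2) ≤ Real.exp (-(t + sv)^2 / (2*v)) := by
    apply Real.exp_le_exp.2
    rw [div_le_div_iff₀ (by norm_num) (by positivity)]
    have h2 : (t + sv)^2 / v = (t / sv + 1)^2 := by
      rw [← hsvsq]; field_simp
    have h3 : t / sv ≤ t / δ := div_le_div_of_nonneg_left ht hδ hδsv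
    have hsq : (t/sv + 1)^2 ≤ (t/δ + 1)^2 := by
      apply pow_le_pow_left₀ (by positivity) (by linarith)
    have h4 : (t + sv)^2 = (t/sv + 1)^2 * v := by
      rw [← h2]; field_simp
    nlinarith [mul_le_mul_of_nonneg_right hsq hvpos.le]
  calc (Real.sqrt (2 * π))⁻¹ * Real.exp (-(t/δ + 1)^2 / 2)
      ≤ (Real.sqrt (2 * π))⁻¹ * Real.exp (-(t + sv)^2 / (2*v)) := by
        apply mul_le_mul_of_nonneg_left hexp (by positivity)
  _ = c0 * sv := by
      rw [hc0, hsplit, mul_inv]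
      field_simp



/-- For all `ε, δ > 0` there is `c > 0` such that for every `N ≥ 1` and all independent
real random variables `Z₁, …, Z_N`, each Gaussian with variance at least `δ²`,
`P(max_i |Z_i| ≥ c √(ln N)) ≥ 1 - ε`. -/
theorem stmt_2 (ε δ : ℝ) (hε : 0 < ε) (hδ : 0 < δ) :
    ∃ c : ℝ, 0 < c ∧
      ∀ (Ω : Type) (_ : MeasurableSpace Ω) (P : Measure Ω) (_ : IsProbabilityMeasure P)
        (N : ℕ) (_ : 1 ≤ N) (Z : Fin N → Ω → ℝ) (μ : Fin N → ℝ) (v : Fin N → ℝ≥0),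
        iIndepFun Z P →
        (∀ i, Measure.map (Z i) P = gaussianReal (μ i) (v i)) →
        (∀ i, δ ^ 2 ≤ (v i : ℝ)) →
        1 - ε ≤ (P {ω | ∃ i, c * Real.sqrt (Real.log N) ≤ |Z i ω|}).toReal := by
  -- constants
  set ε' : ℝ := min ε 2⁻¹ with hε'def
  have hε'pos : 0 < ε' := lt_min hε (by norm_num)
  have hε'le : ε' ≤ 2⁻¹ := min_le_right _ _
  have hε'ε : ε' ≤ ε := min_le_left _ _
  set M : ℝ := Real.log (1/ε') with hMdef
  have hMpos : 0 < M := Real.log_pos (one_lt_one_div hε'pos (by linarith))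
  set K : ℝ := Real.exp 1 * Real.sqrt (2*π) * M with hKdef
  have hKpos : 0 < K := by positivity
  set L₀ : ℝ := 2 * max (Real.log K) 0 + 1 with hL₀def
  have hL₀pos : 0 < L₀ := by positivity
  set a : ℝ := min 2⁻¹ (ε' / Real.sqrt L₀) with hadef
  have hapos : 0 < a := lt_min (by norm_num) (by positivity)
  have hahalf : a ≤ 2⁻¹ := min_le_left _ _
  have haL₀ : a * Real.sqrt L₀ ≤ ε' := by
    have h1 : a ≤ ε' / Real.sqrt L₀ := min_le_right _ _
    rw [le_div_iff₀ (by positivity)] at h1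
    exact h1
  refine ⟨a * δ, by positivity, ?_⟩
  intro Ω mΩ P instP N hN Z μZ vZ hindep hmap hvar
  set L : ℝ := Real.log N with hLdef
  have hNpos : (0:ℝ) < N := by exact_mod_cast hN
  have hL0 : 0 ≤ L := Real.log_nonneg (by exact_mod_cast hN)
  set t : ℝ := a * δ * Real.sqrt L with htdef
  have ht : 0 ≤ t := by positivity
  have htδ : t / δ = a * Real.sqrt L := by field_simp; ring
  -- measurability
  have hZae : ∀ i, AEMeasurable (Z i) P := fun i =>
    aemeasurable_of_map_neZero (by rw [hmap i]; infer_instance)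
  set S : Set Ω := {ω | ∃ i, t ≤ |Z i ω|} with hSdef
  have hcompl : Sᶜ = ⋂ i, Z i ⁻¹' (Set.Ioo (-t) t) := by
    ext ω
    simp [hSdef, Set.mem_iInter, abs_lt, not_le]
  have hprod : P Sᶜ = ∏ i, P (Z i ⁻¹' Set.Ioo (-t) t) := by
    rw [hcompl]
    exact hindep.meas_iInter fun i => ⟨Set.Ioo (-t) t, measurableSet_Ioo, rfl⟩
  have hPi : ∀ i, P (Z i ⁻¹' Set.Ioo (-t) t) = gaussianReal (μZ i) (vZ i) (Set.Ioo (-t) t) :=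
    fun i => by rw [← hmap i, Measure.map_apply_of_aemeasurable (hZae i) measurableSet_Ioo]
  set q : Fin N → ℝ := fun i => (gaussianReal (μZ i) (vZ i) (Set.Ioo (-t) t)).toReal with hqdef
  have hcomplR : (P Sᶜ).toReal = ∏ i, q i := by
    rw [hprod, ENNReal.toReal_prod]
    exact Finset.prod_congr rfl fun i _ => by rw [hPi i]
  have hq0 : ∀ i, 0 ≤ q i := fun i => ENNReal.toReal_nonneg
  have hq1 : ∀ i, q i ≤ 1 := fun i => by
    have := ENNReal.toReal_mono ENNReal.one_ne_top (prob_le_one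
      (μ := gaussianReal (μZ i) (vZ i)) (s := Set.Ioo (-t) t))
    simpa using this
  have hqA : ∀ i, q i ≤ a * Real.sqrt L := fun i => by
    have := gauss_Ioo_le hδ (μZ i) t ht (vZ i) (hvar i)
    rwa [htδ] at this
  set r : ℝ := (Real.sqrt (2*π))⁻¹ * Real.exp (-(a * Real.sqrt L + 1)^2 / 2) with hrdef
  have hrpos : 0 < r := by positivity
  have hr1 : r ≤ 1 := by
    have h1 : (1:ℝ) ≤ Real.sqrt (2*π) := by
      rw [show (1:ℝ) = Real.sqrt 1 from (Real.sqrt_one).symm]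
      exact Real.sqrt_le_sqrt (by nlinarith [Real.pi_gt_three])
    have h2 : Real.exp (-(a * Real.sqrt L + 1)^2 / 2) ≤ 1 := by
      rw [Real.exp_le_one_iff]
      apply div_nonpos_of_nonpos_of_nonneg (neg_nonpos.2 (sq_nonneg _)) (by norm_num)
    calc r ≤ (Real.sqrt (2*π))⁻¹ * 1 := mul_le_mul_of_nonneg_left h2 (by positivity)
    _ ≤ 1 := by rw [mul_one]; exact inv_le_one_of_one_le₀ h1
  have hqB : ∀ i, q i ≤ 1 - r := fun i => by
    have htail := gauss_tail_ge hδ (μZ i) t ht (vZ i) (hvar i)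
    rw [htδ] at htail
    have hdisj : Disjoint (Set.Ioo (-t) t) {x : ℝ | t ≤ |x|} := by
      rw [Set.disjoint_left]
      intro x hx hx'
      simp only [Set.mem_setOf_eq] at hx'
      exact absurd (abs_lt.2 ⟨hx.1, hx.2⟩) (not_lt.2 hx')
    have hsum : gaussianReal (μZ i) (vZ i) (Set.Ioo (-t) t)
        + gaussianReal (μZ i) (vZ i) {x : ℝ | t ≤ |x|} ≤ 1 := by
      rw [← measure_union hdisj (measurableSet_le measurable_const measurable_norm)]
      exact prob_le_one
    have := ENNReal.toReal_mono ENNReal.one_ne_top hsum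
    rw [ENNReal.toReal_add (measure_ne_top _ _) (measure_ne_top _ _), ENNReal.toReal_one] at this
    linarith
  -- the product bound
  have hmain : ∏ i, q i ≤ ε' := by
    rcases le_or_gt L L₀ with hsmall | hlarge
    · -- small N
      have hB : ∀ i, q i ≤ a * Real.sqrt L := hqA
      have hBε : a * Real.sqrt L ≤ ε' := by
        calc a * Real.sqrt L ≤ a * Real.sqrt L₀ :=
              mul_le_mul_of_nonneg_left (Real.sqrt_le_sqrt hsmall) hapos.le
        _ ≤ ε' := haL₀
      calc ∏ i, q i ≤ ∏ _i : Fin N, (a * Real.sqrt L) :=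
            Finset.prod_le_prod (fun i _ => hq0 i) (fun i _ => hB i)
      _ = (a * Real.sqrt L) ^ N := by rw [Finset.prod_const, Finset.card_univ, Fintype.card_fin]
      _ ≤ (a * Real.sqrt L) ^ 1 := by
            apply pow_le_pow_of_le_one (by positivity) (by linarith [hε'le]) hN
      _ = a * Real.sqrt L := pow_one _
      _ ≤ ε' := hBε
    · -- large N
      have hrN : M ≤ (N:ℝ) * r := by
        have hNe : (N:ℝ) = Real.exp L := (Real.exp_log hNpos).symm
        have hsq : (a * Real.sqrt L + 1)^2 / 2 ≤ L/2 + 1 := by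
          have hs2 : Real.sqrt L ^ 2 = L := Real.sq_sqrt hL0
          have ha2 : a^2 ≤ 4⁻¹ := by nlinarith
          nlinarith [sq_nonneg (a * Real.sqrt L - 1),
            mul_le_mul_of_nonneg_right ha2 (sq_nonneg (Real.sqrt L)), sq_nonneg (Real.sqrt L)]
        have hr' : (Real.sqrt (2*π))⁻¹ * Real.exp (-(L/2) - 1) ≤ r := by
          apply mul_le_mul_of_nonneg_left _ (by positivity)
          apply Real.exp_le_exp.2
          linarith
        have hKL : K ≤ Real.exp (L/2) := by
          have h1 : Real.log K ≤ L/2 := by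
            have := le_max_left (Real.log K) 0
            linarith
          calc K = Real.exp (Real.log K) := (Real.exp_log hKpos).symm
          _ ≤ Real.exp (L/2) := Real.exp_le_exp.2 h1
        have hMeq : M = (Real.sqrt (2*π))⁻¹ * (K * Real.exp (-1)) := by
          rw [hKdef, Real.exp_neg]
          field_simp
        have e1 : Real.exp L * Real.exp (-(L/2) - 1) = Real.exp (L/2) * Real.exp (-1) := by
          rw [← Real.exp_add, ← Real.exp_add]; congr 1; ring
        have h2 : M ≤ Real.exp L * ((Real.sqrt (2*π))⁻¹ * Real.exp (-(L/2) - 1)) := by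
          rw [hMeq]
          calc (Real.sqrt (2*π))⁻¹ * (K * Real.exp (-1))
              ≤ (Real.sqrt (2*π))⁻¹ * (Real.exp (L/2) * Real.exp (-1)) :=
                mul_le_mul_of_nonneg_left
                  (mul_le_mul_of_nonneg_right hKL (Real.exp_pos _).le) (by positivity)
          _ = Real.exp L * ((Real.sqrt (2*π))⁻¹ * Real.exp (-(L/2) - 1)) := by
                rw [← e1]; ring
        calc M ≤ Real.exp L * ((Real.sqrt (2*π))⁻¹ * Real.exp (-(L/2) - 1)) := h2
        _ ≤ Real.exp L * r := mul_le_mul_of_nonneg_left hr' (Real.exp_pos _).le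
        _ = (N:ℝ) * r := by rw [hNe]
      calc ∏ i, q i ≤ ∏ _i : Fin N, (1 - r) :=
            Finset.prod_le_prod (fun i _ => hq0 i) (fun i _ => hqB i)
      _ = (1 - r) ^ N := by rw [Finset.prod_const, Finset.card_univ, Fintype.card_fin]
      _ ≤ Real.exp (-r) ^ N := by
            apply pow_le_pow_left₀ (by linarith)
            linarith [Real.add_one_le_exp (-r)]
      _ = Real.exp (-(r * N)) := by
            rw [← Real.exp_nat_mul]; ring_nf
      _ ≤ ε' := by
            rw [show ε' = Real.exp (Real.log ε') from (Real.exp_log hε'pos).symm]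
            apply Real.exp_le_exp.2
            have : Real.log ε' = -M := by
              rw [hMdef, one_div, Real.log_inv]; ring
            rw [this]
            nlinarith
  -- conclude
  have hPS : (P S).toReal + (P Sᶜ).toReal ≥ 1 := by
    have hunion : (1:ℝ≥0∞) ≤ P S + P Sᶜ := by
      calc (1:ℝ≥0∞) = P Set.univ := measure_univ.symm
      _ = P (S ∪ Sᶜ) := by rw [Set.union_compl_self]
      _ ≤ P S + P Sᶜ := measure_union_le _ _
    have hfin : P S + P Sᶜ ≠ ⊤ :=
      ENNReal.add_ne_top.2 ⟨measure_ne_top _ _, measure_ne_top _ _⟩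
    have := ENNReal.toReal_mono hfin hunion
    rwa [ENNReal.toReal_one, ENNReal.toReal_add (measure_ne_top _ _) (measure_ne_top _ _)] at this
  have : (P Sᶜ).toReal ≤ ε' := by rw [hcomplR]; exact hmain
  calc 1 - ε ≤ 1 - ε' := by linarith
  _ ≤ (P S).toReal := by linarith
end

section
/- Let k ∈ ℕ with k ≥ 1, let d₀, …, d_{k−1} be nonnegative integers with Σ_{ℓ=0}^{k−1} d_ℓ ≤ k, and let y₀, …, y_{k−1} ∈ ℝ. Then ( Σ_{ℓ=0}^{k−1} |y_ℓ|^{2/3} )³ ≤ 4k² · Σ_{ℓ=0}^{k−1} ( y_ℓ / (d_ℓ + 1) )². -/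
open Finset Real

/-- Hölder-type inequality: if `∑ d_ℓ ≤ k` then
`(∑ |y_ℓ|^{2/3})³ ≤ 4 k² ∑ (y_ℓ/(d_ℓ+1))²`. -/
theorem stmt_7 (k : ℕ) (hk : 1 ≤ k) (d : Fin k → ℕ) (hd : ∑ ℓ, d ℓ ≤ k)
    (y : Fin k → ℝ) :
    (∑ ℓ, |y ℓ| ^ ((2 : ℝ) / 3)) ^ 3
      ≤ 4 * (k : ℝ) ^ 2 * ∑ ℓ, (y ℓ / ((d ℓ : ℝ) + 1)) ^ 2 := by
  set S := ∑ ℓ, (y ℓ / ((d ℓ : ℝ) + 1)) ^ 2 with hS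
  have hS0 : 0 ≤ S := Finset.sum_nonneg fun i _ => sq_nonneg _
  have hdpos : ∀ ℓ : Fin k, (0:ℝ) < (d ℓ : ℝ) + 1 := fun ℓ => by positivity
  have hpq : Real.HolderConjugate (3/2) 3 := Real.holderConjugate_iff.mpr ⟨by norm_num, by norm_num⟩
  have hold := Real.inner_le_Lp_mul_Lq_of_nonneg (s := Finset.univ)
    (f := fun ℓ : Fin k => ((d ℓ : ℝ) + 1) ^ ((2:ℝ)/3))
    (g := fun ℓ : Fin k => (|y ℓ| / ((d ℓ : ℝ) + 1)) ^ ((2:ℝ)/3))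
    hpq (fun i _ => by positivity) (fun i _ => by positivity)
  have h1 : ∀ ℓ : Fin k, ((d ℓ : ℝ) + 1) ^ ((2:ℝ)/3) * (|y ℓ| / ((d ℓ : ℝ) + 1)) ^ ((2:ℝ)/3)
      = |y ℓ| ^ ((2:ℝ)/3) := by
    intro ℓ
    rw [← Real.mul_rpow (hdpos ℓ).le (by positivity),
      mul_div_cancel₀ _ (hdpos ℓ).ne']
  have h2 : ∀ ℓ : Fin k, (((d ℓ : ℝ) + 1) ^ ((2:ℝ)/3)) ^ ((3:ℝ)/2) = (d ℓ : ℝ) + 1 := by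
    intro ℓ
    rw [← Real.rpow_mul (hdpos ℓ).le]
    norm_num
  have h3 : ∀ ℓ : Fin k, ((|y ℓ| / ((d ℓ : ℝ) + 1)) ^ ((2:ℝ)/3)) ^ (3:ℝ)
      = (y ℓ / ((d ℓ : ℝ) + 1)) ^ 2 := by
    intro ℓ
    rw [← Real.rpow_mul (by positivity)]
    norm_num
    rw [div_pow, div_pow, sq_abs]
  simp only [h1, h2, h3] at hold
  have hw : ∑ ℓ : Fin k, ((d ℓ : ℝ) + 1) ≤ 2 * k := by
    rw [Finset.sum_add_distrib]
    push_cast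
    have : (∑ ℓ, (d ℓ : ℝ)) ≤ k := by exact_mod_cast hd
    simp only [Finset.sum_const, Finset.card_univ, Fintype.card_fin, nsmul_eq_mul, mul_one]
    linarith
  have hA : ∑ ℓ, |y ℓ| ^ ((2:ℝ)/3) ≤ (2 * k : ℝ) ^ ((2:ℝ)/3) * S ^ ((1:ℝ)/3) := by
    have h23 : (1:ℝ) / (3/2) = 2/3 := by norm_num
    rw [h23] at hold
    refine hold.trans (mul_le_mul_of_nonneg_right ?_ (Real.rpow_nonneg hS0 _))
    exact Real.rpow_le_rpow (Finset.sum_nonneg fun i _ => (hdpos i).le) hw (by norm_num)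
  have hL0 : 0 ≤ ∑ ℓ, |y ℓ| ^ ((2:ℝ)/3) := Finset.sum_nonneg fun i _ => by positivity
  calc (∑ ℓ, |y ℓ| ^ ((2:ℝ)/3)) ^ 3
      ≤ ((2 * k : ℝ) ^ ((2:ℝ)/3) * S ^ ((1:ℝ)/3)) ^ 3 := by
        exact pow_le_pow_left₀ hL0 hA 3
    _ = 4 * (k : ℝ) ^ 2 * S := by
        rw [mul_pow, ← Real.rpow_natCast ((2*(k:ℝ)) ^ ((2:ℝ)/3)) 3,
          ← Real.rpow_natCast ((S:ℝ) ^ ((1:ℝ)/3)) 3,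
          ← Real.rpow_mul (by positivity), ← Real.rpow_mul hS0]
        norm_num
        exact Or.inl (by ring)
end

section
/- Let T ∈ (0, ∞), let f, g : [0, T] → ℝ be continuous functions, and let I ⊆ ℝ be an open interval. Define τ₀ = min( inf{t ∈ [0,T] : f(t) ∉ I}, inf{t ∈ [0,T] : g(t) ∉ I}, T ), where the infimum of the empty set is taken to be +∞. Assume that for all t ∈ [0, T] one has f(min(t, τ₀)) = g(min(t, τ₀)) and f(t) ∈ I. Then f(t) = g(t) for all t ∈ [0, T]. -/
/-- If two continuous functions `f, g` on `[0,T]` agree up to the first exit time `τ₀`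
of either of them from an open interval `I`, and `f` stays in `I` on all of `[0,T]`,
then `f = g` on `[0,T]`. -/
theorem stmt_8 (T : ℝ) (hT : 0 < T) (f g : ℝ → ℝ)
    (hf : ContinuousOn f (Set.Icc 0 T)) (hg : ContinuousOn g (Set.Icc 0 T))
    (I : Set ℝ) (hIopen : IsOpen I) (hIconn : IsConnected I)
    (τ₀ : ℝ)
    (hτ₀ : τ₀ = sInf ({t ∈ Set.Icc 0 T | f t ∉ I} ∪ {t ∈ Set.Icc 0 T | g t ∉ I}
      ∪ {T}))
    (hagree : ∀ t ∈ Set.Icc 0 T, f (min t τ₀) = g (min t τ₀))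
    (hfI : ∀ t ∈ Set.Icc 0 T, f t ∈ I) :
    ∀ t ∈ Set.Icc 0 T, f t = g t := by
  have hSf : {t ∈ Set.Icc 0 T | f t ∉ I} = ∅ := by
    ext t; simp only [Set.mem_setOf_eq, Set.mem_empty_iff_false, iff_false, not_and, not_not]
    exact fun ht => hfI t ht
  set S : Set ℝ := {t ∈ Set.Icc 0 T | g t ∉ I} with hS
  have hτ : τ₀ = sInf (S ∪ {T}) := by rw [hτ₀, hSf, Set.empty_union]
  have hSclosed : IsClosed S := by
    have : S = Set.Icc 0 T ∩ g ⁻¹' Iᶜ := by ext t; simp [hS, Set.mem_setOf_eq, and_comm]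
    rw [this]
    exact hg.preimage_isClosed_of_isClosed isClosed_Icc hIopen.isClosed_compl
  have hbdd : BddBelow (S ∪ {T}) := by
    refine ⟨min 0 T, fun x hx => ?_⟩
    rcases hx with hx | hx
    · exact le_trans (min_le_left _ _) hx.1.1
    · simp at hx; simp [hx]
  have hτmem : τ₀ ∈ Set.Icc 0 T := by
    constructor
    · rw [hτ]
      apply le_csInf ⟨T, Or.inr rfl⟩
      rintro x (hx | hx)
      · exact hx.1.1
      · simp at hx; simp [hx, hT.le]
    · rw [hτ]
      apply csInf_le hbdd (Or.inr rfl)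
  -- S must be empty
  have hSempty : S = ∅ := by
    by_contra hne
    have hne' : S.Nonempty := Set.nonempty_iff_ne_empty.mpr hne
    have hs := hSclosed.csInf_mem hne' (hbdd.mono Set.subset_union_left)
    set s := sInf S with hsdef
    have hsT : s ≤ T := hs.1.2
    have hτs : τ₀ = s := by
      rw [hτ]
      apply le_antisymm
      · exact csInf_le hbdd (Or.inl hs)
      · apply le_csInf ⟨T, Or.inr rfl⟩
        rintro x (hx | hx)
        · exact csInf_le (hbdd.mono Set.subset_union_left) hx
        · simp at hx; rw [hx]; exact hsT
    have := hagree s hs.1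
    rw [hτs, min_self] at this
    exact hs.2 (this ▸ hfI s hs.1)
  have hτT : τ₀ = T := by
    rw [hτ, hSempty, Set.empty_union, csInf_singleton]
  intro t ht
  have := hagree t ht
  rwa [hτT, min_eq_left ht.2] at this
end
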